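/- Let m ≥ 5, let ε ∈ {0,1}, and let x₁, …, x_m be real numbers. Then the sum over all sign vectors a ∈ {0,1}^m satisfying a₁ + ⋯ + a_m ≡ ε (mod 2) of ( (1/2)·Σ_{i=1}^m (−1)^{a_i} x_i )⁴ equals 2^{m−1} · (1/16) · ( 3·(Σ_{i=1}^m x_i²)² − 2·Σ_{i=1}^m x_i⁴ ). -/

import Mathlib

namespace Stmt3Aux

noncomputable def c (b : Bool) : ℝ := if b then -1 else 1

lemma c_sq (b : Bool) : c b * c b = 1 := by cases b <;> simp [c]

lemma c_not (b : Bool) : c (!b) = - c b := by cases b <;> simp [c]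

variable {m : ℕ}

def nn (a : Fin m → Bool) : ℕ := ∑ i, if a i then 1 else 0

noncomputable def χ (a : Fin m → Bool) : ℝ := (-1) ^ (nn a)

lemma flip_sum (r : Fin m) (F : (Fin m → Bool) → ℝ)
    (h : ∀ a, F (Function.update a r (!a r)) = -F a) :
    ∑ a : Fin m → Bool, F a = 0 := by
  have hinv : Function.Involutive (fun a : Fin m → Bool => Function.update a r (!a r)) := by
    intro a
    simp [Function.update_idem, Function.update_self]
  have e : ∑ a : Fin m → Bool, F a
      = ∑ a : Fin m → Bool, F (Function.update a r (!a r)) :=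
    (Fintype.sum_equiv hinv.toPerm _ _ (fun a => rfl)).symm
  have : ∑ a : Fin m → Bool, F a = - ∑ a : Fin m → Bool, F a := by
    conv_lhs => rw [e]
    calc ∑ a : Fin m → Bool, F (Function.update a r (!a r)) = ∑ a : Fin m → Bool, -F a :=
          Finset.sum_congr rfl (fun a _ => h a)
      _ = - ∑ a : Fin m → Bool, F a := Finset.sum_neg_distrib _
  linarith

lemma c_update (a : Fin m → Bool) (r i : Fin m) :
    c (Function.update a r (!a r) i) = (if i = r then (-1:ℝ) else 1) * c (a i) := by
  by_cases h : i = r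
  · subst h; simp [Function.update_self, c_not]
  · simp [Function.update_of_ne h, h]

lemma nn_update (a : Fin m → Bool) (r : Fin m) :
    nn (Function.update a r (!a r)) + (if a r then 1 else 0)
      = nn a + (if !a r then 1 else 0) := by
  unfold nn
  rw [← Finset.sum_erase_add _ _ (Finset.mem_univ r),
      ← Finset.sum_erase_add _ (fun i => if a i then 1 else 0) (Finset.mem_univ r)]
  have : ∀ i ∈ Finset.univ.erase r,
      (if Function.update a r (!a r) i then 1 else 0) = (if a i then (1:ℕ) else 0) := by
    intro i hi
    rw [Function.update_of_ne (Finset.mem_erase.1 hi).1]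
  rw [Finset.sum_congr rfl this, Function.update_self]
  ring

lemma χ_update (a : Fin m → Bool) (r : Fin m) :
    χ (Function.update a r (!a r)) = - χ a := by
  have h := nn_update a r
  unfold χ
  cases hr : a r
  · simp [hr] at h ⊢
    rw [h, pow_succ]; ring
  · simp [hr] at h ⊢
    rw [← h, pow_succ]; ring

lemma flip4 (i j k l r : Fin m)
    (hs : (if i = r then (-1:ℝ) else 1) * (if j = r then (-1:ℝ) else 1) *
      (if k = r then (-1:ℝ) else 1) * (if l = r then (-1:ℝ) else 1) = -1) :
    ∑ a : Fin m → Bool, c (a i) * c (a j) * c (a k) * c (a l) = 0 := by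
  apply flip_sum r
  intro a
  rw [c_update, c_update, c_update, c_update]
  linear_combination (c (a i) * c (a j) * c (a k) * c (a l)) * hs

lemma key (i j k l : Fin m) :
    ∑ a : Fin m → Bool, c (a i) * c (a j) * c (a k) * c (a l)
      = if (i = j ∧ k = l) ∨ (i = k ∧ j = l) ∨ (i = l ∧ j = k) then (2:ℝ)^m else 0 := by
  by_cases hP : (i = j ∧ k = l) ∨ (i = k ∧ j = l) ∨ (i = l ∧ j = k)
  · rw [if_pos hP]
    have hone : ∀ a : Fin m → Bool, c (a i) * c (a j) * c (a k) * c (a l) = 1 := by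
      intro a
      rcases hP with ⟨h1, h2⟩ | ⟨h1, h2⟩ | ⟨h1, h2⟩ <;> rw [h1, h2] <;>
        nlinarith [c_sq (a i), c_sq (a j), c_sq (a k), c_sq (a l)]
    rw [Finset.sum_congr rfl (fun a _ => hone a), Finset.sum_const]
    simp [Fintype.card_fun]
  · rw [if_neg hP]
    push_neg at hP
    obtain ⟨h1, h2, h3⟩ := hP
    by_cases hij : i = j
    · have hkl : k ≠ l := h1 hij
      by_cases hki : k = i
      · have hli : l ≠ i := fun h => hkl (hki.trans h.symm)
        apply flip4 i j k l l
        have hil : i ≠ l := hli.symm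
        simp [hil, hij ▸ hil, hki ▸ hil]
      · apply flip4 i j k l k
        have : i ≠ k := fun h => hki h.symm
        simp [this, hij ▸ this, (Ne.symm hkl)]
    · by_cases hik : i = k
      · have hjl : j ≠ l := h2 hik
        apply flip4 i j k l j
        have hji : j ≠ i := fun h => hij h.symm
        simp [Ne.symm hji, hik ▸ (Ne.symm hji), Ne.symm hjl]
      · by_cases hil : i = l
        · have hjk : j ≠ k := h3 hil
          apply flip4 i j k l j
          have hji : j ≠ i := fun h => hij h.symm
          simp [Ne.symm hji, Ne.symm hjk, hil ▸ (Ne.symm hji)]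
        · apply flip4 i j k l i
          have hji : j ≠ i := fun h => hij h.symm
          have hki : k ≠ i := fun h => hik h.symm
          have hli : l ≠ i := fun h => hil h.symm
          simp [hji, hki, hli]

lemma keyχ (hm : 5 ≤ m) (i j k l : Fin m) :
    ∑ a : Fin m → Bool, χ a * (c (a i) * c (a j) * c (a k) * c (a l)) = 0 := by
  have hex : ∃ r : Fin m, r ≠ i ∧ r ≠ j ∧ r ≠ k ∧ r ≠ l := by
    by_contra hc
    push_neg at hc
    have hsub : (Finset.univ : Finset (Fin m)) ⊆ {i, j, k, l} := by
      intro r _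
      rcases Classical.em (r = i) with h | h
      · simp [h]
      rcases Classical.em (r = j) with h2 | h2
      · simp [h2]
      rcases Classical.em (r = k) with h3 | h3
      · simp [h3]
      · simp [hc r h h2 h3]
    have hcard1 : (Finset.univ : Finset (Fin m)).card ≤ ({i, j, k, l} : Finset (Fin m)).card :=
      Finset.card_le_card hsub
    have hcard2 : ({i, j, k, l} : Finset (Fin m)).card ≤ 4 := by
      apply le_trans (Finset.card_insert_le _ _)
      apply Nat.succ_le_succ
      apply le_trans (Finset.card_insert_le _ _)
      apply Nat.succ_le_succ
      apply le_trans (Finset.card_insert_le _ _)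
      simp
    simp [Finset.card_univ] at hcard1
    omega
  obtain ⟨r, hri, hrj, hrk, hrl⟩ := hex
  apply flip_sum r
  intro a
  rw [χ_update, c_update, c_update, c_update, c_update,
    if_neg (Ne.symm hri), if_neg (Ne.symm hrj), if_neg (Ne.symm hrk), if_neg (Ne.symm hrl)]
  ring

lemma expand (x : Fin m → ℝ) (a : Fin m → Bool) :
    (∑ i, c (a i) * x i)^4
      = ∑ i, ∑ j, ∑ k, ∑ l,
          (c (a i) * c (a j) * c (a k) * c (a l)) * (x i * x j * x k * x l) := by
  calc (∑ i, c (a i) * x i)^4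
      = (∑ i, c (a i) * x i) * (∑ j, c (a j) * x j) * (∑ k, c (a k) * x k)
          * (∑ l, c (a l) * x l) := by ring
    _ = _ := by
        simp only [Finset.sum_mul, Finset.mul_sum]
        refine Finset.sum_congr rfl fun i _ => Finset.sum_congr rfl fun j _ =>
          Finset.sum_congr rfl fun k _ => Finset.sum_congr rfl fun l _ => by ring

lemma swap4 (g : (Fin m → Bool) → Fin m → Fin m → Fin m → Fin m → ℝ) :
    ∑ a : Fin m → Bool, ∑ i, ∑ j, ∑ k, ∑ l, g a i j k l
      = ∑ i, ∑ j, ∑ k, ∑ l, ∑ a : Fin m → Bool, g a i j k l := by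
  rw [Finset.sum_comm]
  refine Finset.sum_congr rfl fun i _ => ?_
  rw [Finset.sum_comm]
  refine Finset.sum_congr rfl fun j _ => ?_
  rw [Finset.sum_comm]
  refine Finset.sum_congr rfl fun k _ => ?_
  exact Finset.sum_comm

set_option maxHeartbeats 1000000 in
lemma ptwise (i j k l : Fin m) (X : ℝ) :
    (if (i = j ∧ k = l) ∨ (i = k ∧ j = l) ∨ (i = l ∧ j = k) then (2:ℝ)^m else 0) * X
      = 2^m * ((if i = j ∧ k = l then X else 0) + (if i = k ∧ j = l then X else 0)
          + (if i = l ∧ j = k then X else 0)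
          - 2 * (if i = j ∧ i = k ∧ i = l then X else 0)) := by
  by_cases h1 : i = j <;> by_cases h2 : k = l <;> by_cases h3 : i = k <;>
    by_cases h4 : j = l <;> by_cases h5 : i = l <;> by_cases h6 : j = k <;>
    simp_all <;> ring

lemma deltaA (x : Fin m → ℝ) :
    (∑ i, ∑ j, ∑ k, ∑ l, if i = j ∧ k = l then x i * x j * x k * x l else 0)
      = (∑ i, x i^2)^2 := by
  simp only [ite_and, Finset.sum_ite_irrel, Finset.sum_ite_eq, Finset.mem_univ, if_true,
    Finset.sum_const_zero, Finset.sum_ite_eq']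
  rw [sq, Finset.sum_mul_sum]
  exact Finset.sum_congr rfl fun i _ => Finset.sum_congr rfl fun k _ => by ring

lemma deltaB (x : Fin m → ℝ) :
    (∑ i, ∑ j, ∑ k, ∑ l, if i = k ∧ j = l then x i * x j * x k * x l else 0)
      = (∑ i, x i^2)^2 := by
  simp only [ite_and, Finset.sum_ite_irrel, Finset.sum_ite_eq, Finset.mem_univ, if_true,
    Finset.sum_const_zero, Finset.sum_ite_eq']
  rw [sq, Finset.sum_mul_sum]
  exact Finset.sum_congr rfl fun i _ => Finset.sum_congr rfl fun k _ => by ring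

lemma deltaC (x : Fin m → ℝ) :
    (∑ i, ∑ j, ∑ k, ∑ l, if i = l ∧ j = k then x i * x j * x k * x l else 0)
      = (∑ i, x i^2)^2 := by
  simp only [ite_and, Finset.sum_ite_irrel, Finset.sum_ite_eq, Finset.mem_univ, if_true,
    Finset.sum_const_zero, Finset.sum_ite_eq']
  rw [sq, Finset.sum_mul_sum]
  exact Finset.sum_congr rfl fun i _ => Finset.sum_congr rfl fun k _ => by ring

lemma deltaD (x : Fin m → ℝ) :
    (∑ i, ∑ j, ∑ k, ∑ l, if i = j ∧ i = k ∧ i = l then x i * x j * x k * x l else 0)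
      = ∑ i, x i^4 := by
  simp only [ite_and, Finset.sum_ite_irrel, Finset.sum_ite_eq, Finset.mem_univ, if_true,
    Finset.sum_const_zero, Finset.sum_ite_eq']
  exact Finset.sum_congr rfl fun i _ => by ring

lemma sumA (x : Fin m → ℝ) :
    ∑ a : Fin m → Bool, (∑ i, c (a i) * x i)^4
      = 2^m * (3 * (∑ i, x i^2)^2 - 2 * ∑ i, x i^4) := by
  rw [Finset.sum_congr rfl fun a _ => expand x a, swap4]
  have e2 : ∀ i j k l : Fin m,
      (∑ a : Fin m → Bool, (c (a i) * c (a j) * c (a k) * c (a l)) * (x i * x j * x k * x l))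
        = 2^m * ((if i = j ∧ k = l then x i * x j * x k * x l else 0)
            + (if i = k ∧ j = l then x i * x j * x k * x l else 0)
            + (if i = l ∧ j = k then x i * x j * x k * x l else 0)
            - 2 * (if i = j ∧ i = k ∧ i = l then x i * x j * x k * x l else 0)) := by
    intro i j k l
    rw [← Finset.sum_mul, key i j k l, ptwise]
  calc ∑ i, ∑ j, ∑ k, ∑ l, ∑ a : Fin m → Bool,
        (c (a i) * c (a j) * c (a k) * c (a l)) * (x i * x j * x k * x l)
      = ∑ i, ∑ j, ∑ k, ∑ l, (2:ℝ)^m * ((if i = j ∧ k = l then x i * x j * x k * x l else 0)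
            + (if i = k ∧ j = l then x i * x j * x k * x l else 0)
            + (if i = l ∧ j = k then x i * x j * x k * x l else 0)
            - 2 * (if i = j ∧ i = k ∧ i = l then x i * x j * x k * x l else 0)) :=
        Finset.sum_congr rfl fun i _ => Finset.sum_congr rfl fun j _ =>
          Finset.sum_congr rfl fun k _ => Finset.sum_congr rfl fun l _ => e2 i j k l
    _ = 2^m * (3 * (∑ i, x i^2)^2 - 2 * ∑ i, x i^4) := by
        simp only [← Finset.mul_sum, Finset.sum_add_distrib, Finset.sum_sub_distrib]
        rw [deltaA, deltaB, deltaC, deltaD]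
        ring

lemma sumB (hm : 5 ≤ m) (x : Fin m → ℝ) :
    ∑ a : Fin m → Bool, χ a * (∑ i, c (a i) * x i)^4 = 0 := by
  have e1 : ∀ a : Fin m → Bool, χ a * (∑ i, c (a i) * x i)^4
      = ∑ i, ∑ j, ∑ k, ∑ l, χ a * ((c (a i) * c (a j) * c (a k) * c (a l))
          * (x i * x j * x k * x l)) := by
    intro a
    rw [expand]
    simp only [Finset.mul_sum]
  rw [Finset.sum_congr rfl fun a _ => e1 a, swap4]
  have e2 : ∀ i j k l : Fin m,
      (∑ a : Fin m → Bool, χ a * ((c (a i) * c (a j) * c (a k) * c (a l))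
          * (x i * x j * x k * x l))) = 0 := by
    intro i j k l
    have : ∀ a : Fin m → Bool, χ a * ((c (a i) * c (a j) * c (a k) * c (a l))
        * (x i * x j * x k * x l))
        = (χ a * (c (a i) * c (a j) * c (a k) * c (a l))) * (x i * x j * x k * x l) := by
      intro a; ring
    rw [Finset.sum_congr rfl fun a _ => this a, ← Finset.sum_mul, keyχ hm, zero_mul]
  simp only [e2, Finset.sum_const_zero]

end Stmt3Aux

open Stmt3Aux

theorem stmt_3 (m : ℕ) (hm : 5 ≤ m) (ε : ℕ) (hε : ε = 0 ∨ ε = 1) (x : Fin m → ℝ) :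
    ∑ a ∈ Finset.univ.filter
        (fun a : Fin m → Bool => (∑ i, (if a i then 1 else 0)) % 2 = ε),
        ((1/2) * ∑ i, (if a i then (-1 : ℝ) else 1) * x i) ^ 4
      = 2 ^ (m - 1) * (1/16) * (3 * (∑ i, x i ^ 2) ^ 2 - 2 * ∑ i, x i ^ 4) := by
  have hc : ∀ (a : Fin m → Bool) (i : Fin m), (if a i then (-1:ℝ) else 1) = c (a i) :=
    fun a i => rfl
  have hn : ∀ a : Fin m → Bool, (∑ i, if a i then 1 else 0) = nn a := fun a => rfl
  simp only [hc, hn]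
  set f : (Fin m → Bool) → ℝ := fun a => ((1/2) * ∑ i, c (a i) * x i) ^ 4 with hf
  have hT : ∑ a : Fin m → Bool, f a
      = (1/16) * (2^m * (3 * (∑ i, x i^2)^2 - 2 * ∑ i, x i^4)) := by
    rw [← sumA x, Finset.mul_sum]
    exact Finset.sum_congr rfl fun a _ => by rw [hf]; ring
  have hX : ∑ a : Fin m → Bool, χ a * f a = 0 := by
    have : ∀ a : Fin m → Bool, χ a * f a = (1/16) * (χ a * (∑ i, c (a i) * x i)^4) := by
      intro a; rw [hf]; ring
    rw [Finset.sum_congr rfl fun a _ => this a, ← Finset.mul_sum, sumB hm, mul_zero]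
  set S0 := ∑ a ∈ Finset.univ.filter (fun a : Fin m → Bool => nn a % 2 = 0), f a with hS0
  set S1 := ∑ a ∈ Finset.univ.filter (fun a : Fin m → Bool => nn a % 2 = 1), f a with hS1
  have hsplit : S0 + S1 = ∑ a : Fin m → Bool, f a := by
    rw [hS0, hS1, ← Finset.sum_filter_add_sum_filter_not Finset.univ
      (fun a : Fin m → Bool => nn a % 2 = 0) f]
    congr 1
    apply Finset.sum_congr _ (fun a _ => rfl)
    apply Finset.filter_congr
    intro a _
    constructor
    · intro h; omega
    · intro h; omega
  have hdiff : S0 - S1 = ∑ a : Fin m → Bool, χ a * f a := by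
    rw [← Finset.sum_filter_add_sum_filter_not Finset.univ
      (fun a : Fin m → Bool => nn a % 2 = 0) (fun a => χ a * f a)]
    have e0 : ∑ a ∈ Finset.univ.filter (fun a : Fin m → Bool => nn a % 2 = 0), χ a * f a
        = S0 := by
      rw [hS0]
      apply Finset.sum_congr rfl
      intro a ha
      have h := (Finset.mem_filter.1 ha).2
      have : χ a = 1 := by
        unfold χ
        exact Even.neg_one_pow (Nat.even_iff.2 h)
      rw [this, one_mul]
    have e1 : ∑ a ∈ Finset.univ.filter (fun a : Fin m → Bool => ¬(nn a % 2 = 0)), χ a * f a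
        = -S1 := by
      rw [hS1, ← Finset.sum_neg_distrib]
      apply Finset.sum_congr
      · apply Finset.filter_congr
        intro a _
        constructor
        · intro h; omega
        · intro h; omega
      · intro a ha
        have h := (Finset.mem_filter.1 ha).2
        have : χ a = -1 := by
          unfold χ
          exact Odd.neg_one_pow (Nat.odd_iff.2 (by omega))
        rw [this]; ring
    rw [e0, e1]
    ring
  have hS0S1 : S0 = S1 := by rw [hX] at hdiff; linarith
  have hval : S0 = 2 ^ (m-1) * (1/16) * (3 * (∑ i, x i^2)^2 - 2 * ∑ i, x i^4) := by
    have h2m : (2:ℝ)^m = 2^(m-1) * 2 := by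
      rw [← pow_succ]
      congr 1
      omega
    rw [hT, h2m] at hsplit
    rw [← hS0S1] at hsplit
    linarith
  rcases hε with h | h <;> subst h
  · exact hval
  · show S1 = _
    rw [← hS0S1]
    exact hval
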